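/- For every positive natural number n and any sets A and B, if there is an injection from {0,…,n−1} × A into {0,…,n−1} × B, then there is an injection from A into B. -/

import Mathlib

lemma cardinal_div_aux (n : ℕ) (hn : 1 ≤ n) (a b : Cardinal) (h : (n : Cardinal) * a ≤ n * b) :
    a ≤ b := by
  rcases lt_or_ge a Cardinal.aleph0 with ha | ha
  · rcases lt_or_ge b Cardinal.aleph0 with hb | hb
    · lift a to ℕ using ha
      lift b to ℕ using hb
      rw [← Nat.cast_mul, ← Nat.cast_mul, Nat.cast_le] at h
      exact_mod_cast Nat.le_of_mul_le_mul_left h hn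
    · exact ha.le.trans hb
  · have hna : (n : Cardinal) * a = a := by
      rw [mul_comm]
      exact Cardinal.mul_eq_left ha ((Cardinal.nat_lt_aleph0 n).le.trans ha)
        (by exact_mod_cast Nat.one_le_iff_ne_zero.mp hn)
    rcases lt_or_ge b Cardinal.aleph0 with hb | hb
    · exfalso
      have hlt : (n : Cardinal) * b < Cardinal.aleph0 :=
        Cardinal.mul_lt_aleph0 (Cardinal.nat_lt_aleph0 n) hb
      rw [hna] at h
      exact (h.trans_lt hlt).not_ge ha
    · have hnb : (n : Cardinal) * b = b := by
        rw [mul_comm]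
        exact Cardinal.mul_eq_left hb ((Cardinal.nat_lt_aleph0 n).le.trans hb)
          (by exact_mod_cast Nat.one_le_iff_ne_zero.mp hn)
      rwa [hna, hnb] at h

theorem div_ineq_by_n (n : ℕ) (hn : 1 ≤ n) (A B : Type*) :
    Nonempty (Fin n × A ↪ Fin n × B) → Nonempty (A ↪ B) := by
  intro h
  rw [← Cardinal.lift_mk_le'] at h ⊢
  apply cardinal_div_aux n hn
  simpa [Cardinal.mk_prod, Cardinal.lift_mul, Cardinal.lift_natCast, Cardinal.mk_fin,
    Cardinal.lift_lift] using h
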